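/- arXiv:1704.02369 — 2 statements merged into one kernel-verified Lean document; each statement's English description precedes it below -/
import Mathlib

section
/- Let S be a finite state space, A an S×S real rate matrix with exit rates A_s = -A_{ss}, k₁ > 1, and Ω > 0 with Ω ≥ k₁·max_s A_s. Let B = I + (1/Ω)·A, let π₀ be a probability vector on S, and let n ≥ 1. Let the prior on paths v = (v₀,…,v_n) ∈ S^{n+1} be the Markov chain law Prior(v) = π₀(v₀)·∏_{i=0}^{n-1} B_{v_i v_{i+1}}, and let L : S^{n+1} → ℝ be a likelihood with ℓ ≤ L(v) ≤ u for all v, 0 < ℓ ≤ u. Define the posterior Post(v) = Prior(v)·L(v) / Σ_{v'} Prior(v')·L(v'). Then for every index 0 ≤ i ≤ n-1, the posterior probability of a self-transition satisfies Post(V_i = V_{i+1}) = Σ_{v : v_i = v_{i+1}} Post(v) ≥ (ℓ/u)·(1 - 1/k₁) > 0. -/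
open Matrix BigOperators

private theorem sum_snoc_aux (m : ℕ) (S : Type*) [Fintype S] (g : (Fin (m+2) → S) → ℝ) :
    ∑ v : Fin (m+2) → S, g v = ∑ w : Fin (m+1) → S, ∑ s : S, g (Fin.snoc w s) := by
  have := Fintype.sum_equiv (Fin.snocEquiv (fun _ : Fin (m+2) => S))
    (fun p => g (Fin.snoc p.2 p.1)) g (fun p => by simp [Fin.snocEquiv])
  rw [← this, Fintype.sum_prod_type, Finset.sum_comm]

private theorem chain_sum_ge (S : Type*) [Fintype S] (m : ℕ) :
    ∀ (f : S → ℝ), (∀ s, 0 ≤ f s) → ∀ (M : Fin m → Matrix S S ℝ),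
    (∀ j s t, 0 ≤ M j s t) → ∀ (c : Fin m → ℝ), (∀ j, 0 ≤ c j) →
    (∀ j s, c j ≤ ∑ t, M j s t) →
    (∏ j, c j) * ∑ s, f s ≤
      ∑ v : Fin (m+1) → S, f (v 0) * ∏ j, M j (v j.castSucc) (v j.succ) := by
  induction m with
  | zero =>
    intro f hf M hM c hc hrow
    have he : ∑ v : Fin 1 → S, f (v 0) = ∑ s, f s :=
      Fintype.sum_equiv (Equiv.funUnique (Fin 1) S) _ _ (fun v => rfl)
    simp only [Finset.univ_eq_empty, Finset.prod_empty, mul_one, one_mul]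
    rw [he]
  | succ m ih =>
    intro f hf M hM c hc hrow
    rw [sum_snoc_aux m S]
    have key : ∀ w : Fin (m+1) → S,
        (f (w 0) * ∏ j : Fin m, (Fin.init M) j (w j.castSucc) (w j.succ)) * c (Fin.last m) ≤
        ∑ s : S, f ((Fin.snoc w s : Fin (m+2) → S) 0) *
          ∏ j : Fin (m+1), M j ((Fin.snoc w s : Fin (m+2) → S) j.castSucc)
            ((Fin.snoc w s : Fin (m+2) → S) j.succ) := by
      intro w
      have hterm : ∀ s : S,
          f ((Fin.snoc w s : Fin (m+2) → S) 0) *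
            ∏ j : Fin (m+1), M j ((Fin.snoc w s : Fin (m+2) → S) j.castSucc)
              ((Fin.snoc w s : Fin (m+2) → S) j.succ)
          = (f (w 0) * ∏ j : Fin m, (Fin.init M) j (w j.castSucc) (w j.succ)) *
              M (Fin.last m) (w (Fin.last m)) s := by
        intro s
        have h0 : (Fin.snoc w s : Fin (m+2) → S) 0 = w 0 := by
          have : (0 : Fin (m+2)) = (0 : Fin (m+1)).castSucc := by simp
          rw [this, Fin.snoc_castSucc]
        rw [h0, Fin.prod_univ_castSucc]
        have hlast : M (Fin.last m) ((Fin.snoc w s : Fin (m+2) → S) (Fin.last m).castSucc)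
            ((Fin.snoc w s : Fin (m+2) → S) (Fin.last m).succ)
            = M (Fin.last m) (w (Fin.last m)) s := by
          rw [Fin.snoc_castSucc, Fin.succ_last, Fin.snoc_last]
        rw [hlast]
        have hmid : ∀ j : Fin m,
            M j.castSucc ((Fin.snoc w s : Fin (m+2) → S) j.castSucc.castSucc)
              ((Fin.snoc w s : Fin (m+2) → S) j.castSucc.succ)
            = (Fin.init M) j (w j.castSucc) (w j.succ) := by
          intro j
          rw [Fin.succ_castSucc, Fin.snoc_castSucc, Fin.snoc_castSucc]
          rfl
        rw [Finset.prod_congr rfl (fun j _ => hmid j)]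
        ring
      have hfront : 0 ≤ f (w 0) * ∏ j : Fin m, (Fin.init M) j (w j.castSucc) (w j.succ) :=
        mul_nonneg (hf _) (Finset.prod_nonneg fun j _ => hM _ _ _)
      calc (f (w 0) * ∏ j : Fin m, (Fin.init M) j (w j.castSucc) (w j.succ)) * c (Fin.last m)
          ≤ (f (w 0) * ∏ j : Fin m, (Fin.init M) j (w j.castSucc) (w j.succ)) *
              ∑ t, M (Fin.last m) (w (Fin.last m)) t :=
            mul_le_mul_of_nonneg_left (hrow _ _) hfront
        _ = ∑ s : S, (f (w 0) * ∏ j : Fin m, (Fin.init M) j (w j.castSucc) (w j.succ)) *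
              M (Fin.last m) (w (Fin.last m)) s := by rw [Finset.mul_sum]
        _ = _ := by
            refine Finset.sum_congr rfl fun s _ => ?_
            rw [hterm s]
    have hIH := ih f hf (Fin.init M) (fun j s t => hM _ _ _) (Fin.init c)
      (fun j => hc _) (fun j s => hrow _ _)
    calc (∏ j : Fin (m+1), c j) * ∑ s, f s
        = ((∏ j : Fin m, (Fin.init c) j) * ∑ s, f s) * c (Fin.last m) := by
          rw [Fin.prod_univ_castSucc]
          have h : (∏ j : Fin m, (Fin.init c) j) = ∏ j : Fin m, c j.castSucc :=
            Finset.prod_congr rfl (fun j _ => rfl)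
          rw [h]; ring
      _ ≤ (∑ w : Fin (m+1) → S,
            f (w 0) * ∏ j : Fin m, (Fin.init M) j (w j.castSucc) (w j.succ)) * c (Fin.last m) :=
          mul_le_mul_of_nonneg_right hIH (hc _)
      _ = ∑ w : Fin (m+1) → S,
            (f (w 0) * ∏ j : Fin m, (Fin.init M) j (w j.castSucc) (w j.succ)) * c (Fin.last m) := by
          rw [Finset.sum_mul]
      _ ≤ _ := Finset.sum_le_sum fun w _ => key w

private theorem chain_sum_eq (S : Type*) [Fintype S] (m : ℕ) :
    ∀ (f : S → ℝ) (M : Fin m → Matrix S S ℝ), (∀ j s, ∑ t, M j s t = 1) →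
    ∑ v : Fin (m+1) → S, f (v 0) * ∏ j, M j (v j.castSucc) (v j.succ) = ∑ s, f s := by
  induction m with
  | zero =>
    intro f M hrow
    have he : ∑ v : Fin 1 → S, f (v 0) = ∑ s, f s :=
      Fintype.sum_equiv (Equiv.funUnique (Fin 1) S) _ _ (fun v => rfl)
    simp only [Finset.univ_eq_empty, Finset.prod_empty, mul_one]
    rw [he]
  | succ m ih =>
    intro f M hrow
    rw [sum_snoc_aux m S]
    have key : ∀ w : Fin (m+1) → S,
        ∑ s : S, f ((Fin.snoc w s : Fin (m+2) → S) 0) *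
          ∏ j : Fin (m+1), M j ((Fin.snoc w s : Fin (m+2) → S) j.castSucc)
            ((Fin.snoc w s : Fin (m+2) → S) j.succ)
        = f (w 0) * ∏ j : Fin m, (Fin.init M) j (w j.castSucc) (w j.succ) := by
      intro w
      have hterm : ∀ s : S,
          f ((Fin.snoc w s : Fin (m+2) → S) 0) *
            ∏ j : Fin (m+1), M j ((Fin.snoc w s : Fin (m+2) → S) j.castSucc)
              ((Fin.snoc w s : Fin (m+2) → S) j.succ)
          = (f (w 0) * ∏ j : Fin m, (Fin.init M) j (w j.castSucc) (w j.succ)) *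
              M (Fin.last m) (w (Fin.last m)) s := by
        intro s
        have h0 : (Fin.snoc w s : Fin (m+2) → S) 0 = w 0 := by
          have : (0 : Fin (m+2)) = (0 : Fin (m+1)).castSucc := by simp
          rw [this, Fin.snoc_castSucc]
        rw [h0, Fin.prod_univ_castSucc]
        have hlast : M (Fin.last m) ((Fin.snoc w s : Fin (m+2) → S) (Fin.last m).castSucc)
            ((Fin.snoc w s : Fin (m+2) → S) (Fin.last m).succ)
            = M (Fin.last m) (w (Fin.last m)) s := by
          rw [Fin.snoc_castSucc, Fin.succ_last, Fin.snoc_last]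
        rw [hlast]
        have hmid : ∀ j : Fin m,
            M j.castSucc ((Fin.snoc w s : Fin (m+2) → S) j.castSucc.castSucc)
              ((Fin.snoc w s : Fin (m+2) → S) j.castSucc.succ)
            = (Fin.init M) j (w j.castSucc) (w j.succ) := by
          intro j
          rw [Fin.succ_castSucc, Fin.snoc_castSucc, Fin.snoc_castSucc]
          rfl
        rw [Finset.prod_congr rfl (fun j _ => hmid j)]
        ring
      rw [Finset.sum_congr rfl (fun s _ => hterm s), ← Finset.mul_sum, hrow, mul_one]
    rw [Finset.sum_congr rfl (fun w _ => key w)]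
    exact ih f (Fin.init M) (fun j s => hrow _ _)

/-- **Proposition 2 of the paper.** Let `A` be a rate matrix on a finite state
space `S` with exit rates `A_s = -A s s`, `k₁ > 1`, and `Ω > 0` with `Ω ≥ k₁·A_s` for every
`s` (i.e. `Ω ≥ k₁·max_s A_s`). Let `B = I + Ω⁻¹ • A`, `π₀` a probability vector, `n ≥ 1`,
`Prior(v) = π₀(v₀)·∏ᵢ B_{vᵢ v_{i+1}}` the Markov prior over paths `v : Fin (n+1) → S`, and
`L` a likelihood bounded in `[ℓ,u]` with `0 < ℓ ≤ u`; let `Post` be the corresponding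
posterior. Then the posterior probability of a self-transition at any step `i` is at least
`(ℓ/u)·(1 - 1/k₁) > 0`. -/
theorem posterior_self_transition_lower_bound
    {S : Type*} [Fintype S] [DecidableEq S] [Nonempty S]
    (A : Matrix S S ℝ)
    (hoff : ∀ s t, s ≠ t → 0 ≤ A s t) (hrow : ∀ s, ∑ t, A s t = 0)
    (k₁ Ω : ℝ) (hk₁ : 1 < k₁) (hΩ : 0 < Ω) (hΩmax : ∀ s, k₁ * (-A s s) ≤ Ω)
    (B : Matrix S S ℝ) (hB : B = 1 + Ω⁻¹ • A)
    (π₀ : S → ℝ) (hπ₀ : ∀ s, 0 ≤ π₀ s) (hπ₀1 : ∑ s, π₀ s = 1)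
    (n : ℕ) (hn : 1 ≤ n)
    (Prior : (Fin (n + 1) → S) → ℝ)
    (hPrior : ∀ v, Prior v = π₀ (v 0) * ∏ i : Fin n, B (v i.castSucc) (v i.succ))
    (L : (Fin (n + 1) → S) → ℝ) (ℓ u : ℝ) (hℓ : 0 < ℓ) (hℓu : ℓ ≤ u)
    (hL : ∀ v, ℓ ≤ L v ∧ L v ≤ u)
    (Post : (Fin (n + 1) → S) → ℝ)
    (hPost : ∀ v, Post v = Prior v * L v / ∑ v', Prior v' * L v') :
    ∀ i : Fin n,
      ℓ / u * (1 - 1 / k₁) ≤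
        ∑ v ∈ Finset.univ.filter (fun v : Fin (n + 1) → S => v i.castSucc = v i.succ), Post v
      ∧ 0 < ℓ / u * (1 - 1 / k₁) := by
  intro i
  have hk₁0 : 0 < k₁ := lt_trans one_pos hk₁
  have hu : 0 < u := lt_of_lt_of_le hℓ hℓu
  have hck : 0 < 1 - 1/k₁ := by
    have : 1/k₁ < 1 := by rw [div_lt_one hk₁0]; exact hk₁
    linarith
  -- B diagonal lower bound
  have hBdiag : ∀ s, 1 - 1/k₁ ≤ B s s := by
    intro s
    have h1 : (-A s s) / Ω ≤ 1 / k₁ := by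
      rw [div_le_div_iff₀ hΩ hk₁0]
      linarith [hΩmax s]
    have : B s s = 1 - Ω⁻¹ * (-A s s) := by
      rw [hB]
      simp only [Matrix.add_apply, Matrix.smul_apply, smul_eq_mul, Matrix.one_apply_eq]
      ring
    rw [this, inv_mul_eq_div]
    linarith
  -- B entries nonneg
  have hBnn : ∀ s t, 0 ≤ B s t := by
    intro s t
    by_cases h : s = t
    · subst h; linarith [hBdiag s, hck.le]
    · have hBst : B s t = Ω⁻¹ * A s t := by
        rw [hB]
        simp [Matrix.add_apply, Matrix.smul_apply, smul_eq_mul, Matrix.one_apply, h]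
      rw [hBst]
      exact mul_nonneg (inv_nonneg.2 hΩ.le) (hoff s t h)
  -- B row sums = 1
  have hBrow : ∀ s, ∑ t, B s t = 1 := by
    intro s
    rw [hB]
    simp only [Matrix.add_apply, Matrix.smul_apply, smul_eq_mul]
    rw [Finset.sum_add_distrib, ← Finset.mul_sum, hrow, mul_zero, add_zero]
    simp [Matrix.one_apply]
  -- Prior nonneg
  have hPnn : ∀ v, 0 ≤ Prior v := by
    intro v
    rw [hPrior]
    exact mul_nonneg (hπ₀ _) (Finset.prod_nonneg fun j _ => hBnn _ _)
  -- Total prior mass = 1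
  have hTotal : ∑ v : Fin (n+1) → S, Prior v = 1 := by
    rw [Finset.sum_congr rfl (fun v _ => hPrior v)]
    rw [chain_sum_eq S n π₀ (fun _ => B) (fun j s => hBrow s)]
    exact hπ₀1
  -- masked matrices
  set M : Fin n → Matrix S S ℝ :=
    fun j => if j = i then Matrix.of (fun s t => if s = t then B s t else 0) else B with hM
  have hMnn : ∀ j s t, 0 ≤ M j s t := by
    intro j s t
    by_cases hj : j = i
    · subst hj
      simp only [hM, if_pos rfl, Matrix.of_apply]
      split
      · exact hBnn s t
      · exact le_refl 0
    · simp only [hM, if_neg hj]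
      exact hBnn s t
  set c : Fin n → ℝ := fun j => if j = i then 1 - 1/k₁ else 1 with hc
  have hcnn : ∀ j, 0 ≤ c j := by
    intro j
    by_cases hj : j = i
    · simp only [hc, if_pos hj]; linarith
    · simp only [hc, if_neg hj]; exact zero_le_one
  have hcrow : ∀ j s, c j ≤ ∑ t, M j s t := by
    intro j s
    by_cases hj : j = i
    · simp only [hc, hM, hj, if_pos rfl, Matrix.of_apply]
      rw [Finset.sum_ite_eq Finset.univ s (fun t => B s t)]
      simpa using hBdiag s
    · simp only [hc, hM, if_neg hj]
      rw [hBrow s]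
  have hprodc : ∏ j, c j = 1 - 1/k₁ := by
    rw [Finset.prod_eq_single i (fun j _ hj => by simp [hc, hj]) (fun h => absurd (Finset.mem_univ i) h)]
    simp [hc]
  -- filtered prior sum equals chain sum with masked matrices
  have hfilter : ∑ v ∈ Finset.univ.filter (fun v : Fin (n + 1) → S => v i.castSucc = v i.succ),
      Prior v = ∑ v : Fin (n+1) → S, π₀ (v 0) * ∏ j, M j (v j.castSucc) (v j.succ) := by
    rw [Finset.sum_filter]
    refine Finset.sum_congr rfl fun v _ => ?_
    by_cases h : v i.castSucc = v i.succ
    · rw [if_pos h, hPrior]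
      congr 1
      refine Finset.prod_congr rfl fun j _ => ?_
      by_cases hj : j = i
      · subst hj; simp [hM, h]
      · simp [hM, hj]
    · rw [if_neg h]
      symm
      have : M i (v i.castSucc) (v i.succ) = 0 := by simp [hM, h]
      rw [Finset.prod_eq_zero (Finset.mem_univ i) this, mul_zero]
  -- lower bound on filtered prior
  have hSelf : 1 - 1/k₁ ≤
      ∑ v ∈ Finset.univ.filter (fun v : Fin (n + 1) → S => v i.castSucc = v i.succ), Prior v := by
    rw [hfilter]
    have := chain_sum_ge S n π₀ hπ₀ M hMnn c hcnn hcrow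
    rwa [hprodc, hπ₀1, mul_one] at this
  set Z : ℝ := ∑ v' : Fin (n+1) → S, Prior v' * L v' with hZ
  have hZu : Z ≤ u := by
    calc Z ≤ ∑ v : Fin (n+1) → S, Prior v * u :=
          Finset.sum_le_sum fun v _ => mul_le_mul_of_nonneg_left (hL v).2 (hPnn v)
      _ = u := by rw [← Finset.sum_mul, hTotal, one_mul]
  have hZl : ℓ ≤ Z := by
    calc ℓ = ∑ v : Fin (n+1) → S, Prior v * ℓ := by rw [← Finset.sum_mul, hTotal, one_mul]
      _ ≤ Z := Finset.sum_le_sum fun v _ => mul_le_mul_of_nonneg_left (hL v).1 (hPnn v)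
  have hZpos : 0 < Z := lt_of_lt_of_le hℓ hZl
  -- filtered Prior*L lower bound
  have hX : ℓ * (1 - 1/k₁) ≤
      ∑ v ∈ Finset.univ.filter (fun v : Fin (n + 1) → S => v i.castSucc = v i.succ),
        Prior v * L v := by
    calc ℓ * (1 - 1/k₁)
        ≤ ℓ * ∑ v ∈ Finset.univ.filter (fun v : Fin (n + 1) → S => v i.castSucc = v i.succ),
            Prior v := by
          exact mul_le_mul_of_nonneg_left hSelf hℓ.le
      _ = ∑ v ∈ Finset.univ.filter (fun v : Fin (n + 1) → S => v i.castSucc = v i.succ),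
            ℓ * Prior v := by rw [Finset.mul_sum]
      _ ≤ _ := Finset.sum_le_sum fun v _ => by
          rw [mul_comm]
          exact mul_le_mul_of_nonneg_left (hL v).1 (hPnn v)
  constructor
  · have hPostsum : ∑ v ∈ Finset.univ.filter
        (fun v : Fin (n + 1) → S => v i.castSucc = v i.succ), Post v
        = (∑ v ∈ Finset.univ.filter
            (fun v : Fin (n + 1) → S => v i.castSucc = v i.succ), Prior v * L v) / Z := by
      rw [Finset.sum_div]
      exact Finset.sum_congr rfl fun v _ => hPost v
    rw [hPostsum]
    have h1 : ℓ / u * (1 - 1/k₁) = ℓ * (1 - 1/k₁) / u := by ring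
    rw [h1]
    have hXnn : 0 ≤ ℓ * (1 - 1/k₁) := by positivity
    exact div_le_div₀ (le_trans hXnn hX) hX hZpos hZu
  · positivity
end

section
/- Let S be a finite state space, A an S×S real rate matrix with exit rates A_s = -A_{ss}, k₁ > 1, and Ω > 0 with Ω ≥ k₁·max_s A_s. Let B = I + (1/Ω)·A, π₀ a probability vector on S, n ≥ 1, Prior(v) = π₀(v₀)·∏_{i=0}^{n-1} B_{v_i v_{i+1}} for v ∈ S^{n+1}, and L : S^{n+1} → [ℓ,u] with 0 < ℓ ≤ u; set Post(v) = Prior(v)·L(v)/Σ_{v'} Prior(v')·L(v') and δ₁ = (ℓ/u)·(1 - 1/k₁). Then the posterior expected number of true transitions satisfies Σ_v Post(v) · #{ i ∈ {0,…,n-1} : v_{i+1} ≠ v_i } ≤ n·(1 - δ₁). -/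
open Matrix BigOperators

lemma pathSum {S : Type*} [Fintype S] [DecidableEq S]
    (B : Matrix S S ℝ) (hB1 : ∀ s, ∑ t, B s t = 1) :
    ∀ (m : ℕ) (π : S → ℝ),
      ∑ v : Fin (m + 1) → S, π (v 0) * ∏ i : Fin m, B (v i.castSucc) (v i.succ)
        = ∑ s, π s := by
  intro m
  induction m with
  | zero =>
    intro π
    simp only [Fin.prod_univ_zero, mul_one]
    exact Fintype.sum_equiv (Equiv.funUnique (Fin 1) S) _ _ (fun v => rfl)
  | succ m ih =>
    intro π
    set e := Fin.consEquiv (fun _ : Fin (m + 2) => S) with he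
    have hce : ∀ (p : S × (Fin (m+1) → S)), e p = Fin.cons p.1 p.2 := fun p => rfl
    rw [← e.sum_comp (fun v : Fin (m+2) → S =>
      π (v 0) * ∏ i : Fin (m+1), B (v i.castSucc) (v i.succ))]
    rw [Fintype.sum_prod_type]
    have key : ∀ (s : S) (w : Fin (m+1) → S),
        π (e (s, w) 0) * ∏ i : Fin (m+1), B (e (s, w) i.castSucc) (e (s, w) i.succ)
        = (fun t => π s * B s t) (w 0) * ∏ i : Fin m, B (w i.castSucc) (w i.succ) := by
      intro s w
      rw [hce]
      rw [Fin.prod_univ_succ]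
      have h1 : ∀ i : Fin m, (Fin.cons s w : Fin (m+2) → S) (i.succ.castSucc) = w i.castSucc := by
        intro i; rw [← Fin.succ_castSucc]; exact Fin.cons_succ (α := fun _ : Fin (m+2) => S) s w i.castSucc
      have h2 : (Fin.cons s w : Fin (m+2) → S) 1 = w 0 :=
        Fin.cons_succ (α := fun _ : Fin (m+2) => S) s w 0
      simp only [Fin.cons_zero, Fin.cons_succ, Fin.castSucc_zero, Fin.succ_zero_eq_one, h1, h2]
      ring
    calc ∑ s, ∑ w : Fin (m+1) → S,
          π (e (s, w) 0) * ∏ i : Fin (m+1), B (e (s, w) i.castSucc) (e (s, w) i.succ)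
        = ∑ s, ∑ w : Fin (m+1) → S, (fun t => π s * B s t) (w 0) * ∏ i : Fin m, B (w i.castSucc) (w i.succ) :=
          Finset.sum_congr rfl fun s _ => Finset.sum_congr rfl fun w _ => key s w
      _ = ∑ s, ∑ t, π s * B s t := Finset.sum_congr rfl fun s _ => by simpa using ih (fun t => π s * B s t)
      _ = ∑ s, π s := by
          refine Finset.sum_congr rfl fun s _ => ?_
          rw [← Finset.mul_sum, hB1 s, mul_one]

lemma staySum {S : Type*} [Fintype S] [DecidableEq S]
    (B : Matrix S S ℝ) (hB0 : ∀ s t, 0 ≤ B s t) (hB1 : ∀ s, ∑ t, B s t = 1)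
    (c : ℝ) (hc0 : 0 ≤ c) (hc : ∀ s, c ≤ B s s) :
    ∀ (m : ℕ) (π : S → ℝ), (∀ s, 0 ≤ π s) → ∀ i : Fin m,
      c * ∑ s, π s ≤
        ∑ v : Fin (m + 1) → S,
          (if v i.succ = v i.castSucc then (1:ℝ) else 0) *
            (π (v 0) * ∏ j : Fin m, B (v j.castSucc) (v j.succ)) := by
  intro m
  induction m with
  | zero => intro π hπ i; exact i.elim0
  | succ m ih =>
    intro π hπ i
    set e := Fin.consEquiv (fun _ : Fin (m + 2) => S) with he
    have hce : ∀ (p : S × (Fin (m+1) → S)), e p = Fin.cons p.1 p.2 := fun p => rfl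
    rw [← e.sum_comp (fun v : Fin (m+2) → S =>
      (if v i.succ = v i.castSucc then (1:ℝ) else 0) *
        (π (v 0) * ∏ j : Fin (m+1), B (v j.castSucc) (v j.succ)))]
    rw [Fintype.sum_prod_type]
    have h1 : ∀ (s : S) (w : Fin (m+1) → S) (j : Fin m),
        (Fin.cons s w : Fin (m+2) → S) (j.succ.castSucc) = w j.castSucc := by
      intro s w j; rw [← Fin.succ_castSucc]
      exact Fin.cons_succ (α := fun _ : Fin (m+2) => S) s w j.castSucc
    have h2 : ∀ (s : S) (w : Fin (m+1) → S),
        (Fin.cons s w : Fin (m+2) → S) 1 = w 0 :=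
      fun s w => Fin.cons_succ (α := fun _ : Fin (m+2) => S) s w 0
    have hprod : ∀ (s : S) (w : Fin (m+1) → S),
        ∏ j : Fin (m+1), B ((Fin.cons s w : Fin (m+2) → S) j.castSucc)
            ((Fin.cons s w : Fin (m+2) → S) j.succ)
        = B s (w 0) * ∏ j : Fin m, B (w j.castSucc) (w j.succ) := by
      intro s w
      rw [Fin.prod_univ_succ]
      simp only [Fin.cons_zero, Fin.cons_succ, Fin.castSucc_zero, Fin.succ_zero_eq_one,
        h1, h2]
    induction i using Fin.cases with
    | zero =>
      have key : ∀ (s : S) (w : Fin (m+1) → S),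
          (if e (s, w) (Fin.succ 0) = e (s, w) (Fin.castSucc 0) then (1:ℝ) else 0) *
            (π (e (s, w) 0) * ∏ j : Fin (m+1), B (e (s, w) j.castSucc) (e (s, w) j.succ))
          = (π s * B s s) *
              ((fun t => if t = s then (1:ℝ) else 0) (w 0) *
                ∏ j : Fin m, B (w j.castSucc) (w j.succ)) := by
        intro s w
        rw [hce]
        rw [show ∏ j : Fin (m+1), B ((Fin.cons s w : Fin (m+2) → S) j.castSucc)
            ((Fin.cons s w : Fin (m+2) → S) j.succ)
          = B s (w 0) * ∏ j : Fin m, B (w j.castSucc) (w j.succ) from hprod s w]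
        simp only [Fin.cons_zero, Fin.castSucc_zero, Fin.succ_zero_eq_one, h2]
        by_cases h : w 0 = s
        · subst h; simp only [if_pos rfl]; ring
        · rw [if_neg h]; ring
      calc c * ∑ s, π s = ∑ s, π s * c := by
            rw [Finset.mul_sum]; exact Finset.sum_congr rfl fun s _ => mul_comm _ _
        _ ≤ ∑ s, π s * B s s := Finset.sum_le_sum fun s _ =>
            mul_le_mul_of_nonneg_left (hc s) (hπ s)
        _ = ∑ s, ∑ w : Fin (m+1) → S,
              (if e (s, w) (Fin.succ 0) = e (s, w) (Fin.castSucc 0) then (1:ℝ) else 0) *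
                (π (e (s, w) 0) * ∏ j : Fin (m+1), B (e (s, w) j.castSucc) (e (s, w) j.succ)) := by
            refine Finset.sum_congr rfl fun s _ => ?_
            have hone : ∑ w : Fin (m+1) → S,
                (fun t => if t = s then (1:ℝ) else 0) (w 0) *
                  ∏ j : Fin m, B (w j.castSucc) (w j.succ) = 1 := by
              have h := pathSum B hB1 m (fun t => if t = s then (1:ℝ) else 0)
              simpa using h
            rw [Finset.sum_congr rfl fun w _ => key s w, ← Finset.mul_sum, hone, mul_one]
    | succ j =>
      have key : ∀ (s : S) (w : Fin (m+1) → S),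
          (if e (s, w) (Fin.succ j.succ) = e (s, w) (Fin.castSucc j.succ) then (1:ℝ) else 0) *
            (π (e (s, w) 0) * ∏ k : Fin (m+1), B (e (s, w) k.castSucc) (e (s, w) k.succ))
          = π s * ((if w j.succ = w j.castSucc then (1:ℝ) else 0) *
              ((fun t => B s t) (w 0) * ∏ k : Fin m, B (w k.castSucc) (w k.succ))) := by
        intro s w
        rw [hce]
        rw [show ∏ k : Fin (m+1), B ((Fin.cons s w : Fin (m+2) → S) k.castSucc)
            ((Fin.cons s w : Fin (m+2) → S) k.succ)
          = B s (w 0) * ∏ k : Fin m, B (w k.castSucc) (w k.succ) from hprod s w]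
        simp only [Fin.cons_zero, Fin.cons_succ, h1]
        ring
      calc c * ∑ s, π s = ∑ s, π s * c := by
            rw [Finset.mul_sum]; exact Finset.sum_congr rfl fun s _ => mul_comm _ _
        _ ≤ ∑ s, π s * ∑ w : Fin (m+1) → S,
              (if w j.succ = w j.castSucc then (1:ℝ) else 0) *
                ((fun t => B s t) (w 0) * ∏ k : Fin m, B (w k.castSucc) (w k.succ)) := by
            refine Finset.sum_le_sum fun s _ => mul_le_mul_of_nonneg_left ?_ (hπ s)
            have h := ih (fun t => B s t) (fun t => hB0 s t) j
            rwa [hB1 s, mul_one] at h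
        _ = ∑ s, ∑ w : Fin (m+1) → S,
              (if e (s, w) (Fin.succ j.succ) = e (s, w) (Fin.castSucc j.succ) then (1:ℝ) else 0) *
                (π (e (s, w) 0) * ∏ k : Fin (m+1), B (e (s, w) k.castSucc) (e (s, w) k.succ)) := by
            refine Finset.sum_congr rfl fun s _ => ?_
            rw [Finset.mul_sum]
            exact Finset.sum_congr rfl fun w _ => (key s w).symm



/-- In the setting of the uniformized Markov prior over paths with likelihood
bounded in `[ℓ,u]`, setting `δ₁ = (ℓ/u)·(1 - 1/k₁)`, the posterior expected number of true
transitions (indices `i` with `v_{i+1} ≠ v_i`) is at most `n·(1 - δ₁)`. -/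
theorem posterior_expected_transitions_upper_bound
    {S : Type*} [Fintype S] [DecidableEq S] [Nonempty S]
    (A : Matrix S S ℝ)
    (hoff : ∀ s t, s ≠ t → 0 ≤ A s t) (hrow : ∀ s, ∑ t, A s t = 0)
    (k₁ Ω : ℝ) (hk₁ : 1 < k₁) (hΩ : 0 < Ω) (hΩmax : ∀ s, k₁ * (-A s s) ≤ Ω)
    (B : Matrix S S ℝ) (hB : B = 1 + Ω⁻¹ • A)
    (π₀ : S → ℝ) (hπ₀ : ∀ s, 0 ≤ π₀ s) (hπ₀1 : ∑ s, π₀ s = 1)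
    (n : ℕ) (hn : 1 ≤ n)
    (Prior : (Fin (n + 1) → S) → ℝ)
    (hPrior : ∀ v, Prior v = π₀ (v 0) * ∏ i : Fin n, B (v i.castSucc) (v i.succ))
    (L : (Fin (n + 1) → S) → ℝ) (ℓ u : ℝ) (hℓ : 0 < ℓ) (hℓu : ℓ ≤ u)
    (hL : ∀ v, ℓ ≤ L v ∧ L v ≤ u)
    (Post : (Fin (n + 1) → S) → ℝ)
    (hPost : ∀ v, Post v = Prior v * L v / ∑ v', Prior v' * L v')
    (δ₁ : ℝ) (hδ₁ : δ₁ = ℓ / u * (1 - 1 / k₁)) :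
    ∑ v : Fin (n + 1) → S,
        Post v *
          ((Finset.univ.filter (fun i : Fin n => v i.succ ≠ v i.castSucc)).card : ℝ) ≤
      (n : ℝ) * (1 - δ₁) := by
  have hk0 : (0:ℝ) < k₁ := by linarith
  have hc0 : (0:ℝ) ≤ 1 - 1/k₁ := by
    have h1 : 1/k₁ ≤ 1 := by rw [div_le_one hk0]; linarith
    linarith
  have hBapp : ∀ s t, B s t = (if s = t then (1:ℝ) else 0) + Ω⁻¹ * A s t := by
    intro s t
    rw [hB]
    simp [Matrix.add_apply, Matrix.one_apply, Matrix.smul_apply, smul_eq_mul]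
  have hBd : ∀ s, 1 - 1/k₁ ≤ B s s := by
    intro s
    have h1 : -A s s ≤ Ω / k₁ := by
      rw [le_div_iff₀ hk0, mul_comm]
      exact hΩmax s
    have h2 : Ω⁻¹ * -A s s ≤ 1/k₁ := by
      calc Ω⁻¹ * -A s s ≤ Ω⁻¹ * (Ω / k₁) :=
            mul_le_mul_of_nonneg_left h1 (inv_nonneg.mpr hΩ.le)
        _ = 1/k₁ := by field_simp
    rw [hBapp s s, if_pos rfl]
    have : -(1/k₁) ≤ Ω⁻¹ * A s s := by
      have := neg_le_neg h2
      rwa [mul_neg, neg_neg] at this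
    linarith
  have hB0 : ∀ s t, 0 ≤ B s t := by
    intro s t
    by_cases h : s = t
    · subst h; linarith [hBd s]
    · rw [hBapp s t, if_neg h]
      have := mul_nonneg (inv_nonneg.mpr hΩ.le) (hoff s t h)
      linarith
  have hB1 : ∀ s, ∑ t, B s t = 1 := by
    intro s
    rw [Finset.sum_congr rfl fun t _ => hBapp s t, Finset.sum_add_distrib,
      ← Finset.mul_sum, hrow s, mul_zero, add_zero]
    simp
  set Z := ∑ v' : Fin (n + 1) → S, Prior v' * L v' with hZdef
  have hPriorNN : ∀ v, 0 ≤ Prior v := fun v => by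
    rw [hPrior]
    exact mul_nonneg (hπ₀ _) (Finset.prod_nonneg fun j _ => hB0 _ _)
  have hPrior1 : ∑ v : Fin (n + 1) → S, Prior v = 1 := by
    rw [Finset.sum_congr rfl fun v _ => hPrior v, pathSum B hB1 n π₀, hπ₀1]
  have hZl : ℓ ≤ Z := by
    have h : ∑ v : Fin (n + 1) → S, Prior v * ℓ ≤ Z :=
      Finset.sum_le_sum fun v _ => mul_le_mul_of_nonneg_left (hL v).1 (hPriorNN v)
    rwa [← Finset.sum_mul, hPrior1, one_mul] at h
  have hZu : Z ≤ u := by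
    have h : Z ≤ ∑ v : Fin (n + 1) → S, Prior v * u :=
      Finset.sum_le_sum fun v _ => mul_le_mul_of_nonneg_left (hL v).2 (hPriorNN v)
    rwa [← Finset.sum_mul, hPrior1, one_mul] at h
  have hZ0 : 0 < Z := lt_of_lt_of_le hℓ hZl
  have hu0 : 0 < u := lt_of_lt_of_le hℓ hℓu
  have hPostSum : ∑ v : Fin (n + 1) → S, Post v = 1 := by
    rw [Finset.sum_congr rfl fun v _ => hPost v, ← Finset.sum_div, ← hZdef]
    exact div_self hZ0.ne'
  have hkey : ∀ i : Fin n,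
      ∑ v : Fin (n + 1) → S,
        Post v * (if v i.succ ≠ v i.castSucc then (1:ℝ) else 0) ≤ 1 - δ₁ := by
    intro i
    have hstay : (1 - 1/k₁) ≤ ∑ v : Fin (n + 1) → S,
        (if v i.succ = v i.castSucc then (1:ℝ) else 0) * Prior v := by
      have h := staySum B hB0 hB1 (1 - 1/k₁) hc0 hBd n π₀ hπ₀ i
      rw [hπ₀1, mul_one] at h
      calc (1 - 1/k₁) ≤ ∑ v : Fin (n + 1) → S,
            (if v i.succ = v i.castSucc then (1:ℝ) else 0) *
              (π₀ (v 0) * ∏ j : Fin n, B (v j.castSucc) (v j.succ)) := h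
        _ = ∑ v : Fin (n + 1) → S,
            (if v i.succ = v i.castSucc then (1:ℝ) else 0) * Prior v :=
          Finset.sum_congr rfl fun v _ => by rw [hPrior v]
    have hnum : ℓ * (1 - 1/k₁) ≤ ∑ v : Fin (n + 1) → S,
        Prior v * L v * (if v i.succ = v i.castSucc then (1:ℝ) else 0) := by
      calc ℓ * (1 - 1/k₁)
          ≤ ℓ * ∑ v : Fin (n + 1) → S,
              (if v i.succ = v i.castSucc then (1:ℝ) else 0) * Prior v :=
            mul_le_mul_of_nonneg_left hstay hℓ.le
        _ = ∑ v : Fin (n + 1) → S,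
              ℓ * ((if v i.succ = v i.castSucc then (1:ℝ) else 0) * Prior v) :=
            Finset.mul_sum _ _ _
        _ ≤ ∑ v : Fin (n + 1) → S,
              Prior v * L v * (if v i.succ = v i.castSucc then (1:ℝ) else 0) := by
            refine Finset.sum_le_sum fun v _ => ?_
            by_cases h : v i.succ = v i.castSucc
            · simp only [if_pos h, one_mul, mul_one]
              calc ℓ * Prior v = Prior v * ℓ := mul_comm _ _
                _ ≤ Prior v * L v := mul_le_mul_of_nonneg_left (hL v).1 (hPriorNN v)
            · simp [h]
    have hPostStay : δ₁ ≤ ∑ v : Fin (n + 1) → S,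
        Post v * (if v i.succ = v i.castSucc then (1:ℝ) else 0) := by
      have hsum : ∑ v : Fin (n + 1) → S,
          Post v * (if v i.succ = v i.castSucc then (1:ℝ) else 0)
          = (∑ v : Fin (n + 1) → S,
              Prior v * L v * (if v i.succ = v i.castSucc then (1:ℝ) else 0)) / Z := by
        rw [Finset.sum_div]
        exact Finset.sum_congr rfl fun v _ => by rw [hPost v, div_mul_eq_mul_div]
      rw [hsum, hδ₁]
      have h0 : 0 ≤ ∑ v : Fin (n + 1) → S,
          Prior v * L v * (if v i.succ = v i.castSucc then (1:ℝ) else 0) :=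
        le_trans (mul_nonneg hℓ.le hc0) hnum
      calc ℓ / u * (1 - 1/k₁) = ℓ * (1 - 1/k₁) / u := by ring
        _ ≤ _ := div_le_div₀ h0 hnum hZ0 hZu
    have hsplit : ∑ v : Fin (n + 1) → S,
        Post v * (if v i.succ ≠ v i.castSucc then (1:ℝ) else 0)
        = (∑ v : Fin (n + 1) → S, Post v)
          - ∑ v : Fin (n + 1) → S,
              Post v * (if v i.succ = v i.castSucc then (1:ℝ) else 0) := by
      rw [← Finset.sum_sub_distrib]
      refine Finset.sum_congr rfl fun v _ => ?_
      by_cases h : v i.succ = v i.castSucc <;> simp [h]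
    rw [hsplit, hPostSum]
    linarith
  have hcard : ∀ v : Fin (n + 1) → S,
      ((Finset.univ.filter (fun i : Fin n => v i.succ ≠ v i.castSucc)).card : ℝ)
        = ∑ i : Fin n, (if v i.succ ≠ v i.castSucc then (1:ℝ) else 0) := by
    intro v
    rw [Finset.card_filter]
    push_cast
    exact Finset.sum_congr rfl fun i _ => by by_cases h : v i.succ ≠ v i.castSucc <;> simp [h]
  calc ∑ v : Fin (n + 1) → S,
        Post v *
          ((Finset.univ.filter (fun i : Fin n => v i.succ ≠ v i.castSucc)).card : ℝ)
      = ∑ v : Fin (n + 1) → S, ∑ i : Fin n,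
          Post v * (if v i.succ ≠ v i.castSucc then (1:ℝ) else 0) := by
        refine Finset.sum_congr rfl fun v _ => ?_
        rw [hcard v, Finset.mul_sum]
    _ = ∑ i : Fin n, ∑ v : Fin (n + 1) → S,
          Post v * (if v i.succ ≠ v i.castSucc then (1:ℝ) else 0) := Finset.sum_comm
    _ ≤ ∑ _i : Fin n, (1 - δ₁) := Finset.sum_le_sum fun i _ => hkey i
    _ = (n : ℝ) * (1 - δ₁) := by
        rw [Finset.sum_const, Finset.card_univ, Fintype.card_fin, nsmul_eq_mul]
end
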